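/- Let P_B be a backward policy with P_B(s|s') > 0 for every edge s→s' of G, and let R : X → ℝ with R(x) > 0 for all x ∈ X. Then there exists exactly one pair (P_F, Z), with Z > 0 and P_F a forward policy, such that (P_F, P_B, Z) satisfies trajectory balance for R; moreover this Z equals Σ_{x∈X} R(x). -/

import Mathlib

open scoped BigOperators Classical

/-- The GFlowNet state space `S = {0,1,⊘}^D`: functions from `Fin D` to `Option Bool`,
with `none` denoting the unspecified entry `⊘`. -/
abbrev GState (D : ℕ) := Fin D → Option Bool

/-- The initial state `s₀`, with all entries `⊘`. -/
def initState (D : ℕ) : GState D := fun _ => none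

/-- `s'` is a child of `s` (edge `s → s'` of the DAG `G`): `s'` is obtained from `s`
by changing exactly one `⊘`-entry of `s` to `0` or `1`. -/
def IsChild {D : ℕ} (s s' : GState D) : Prop :=
  ∃ (i : Fin D) (b : Bool), s i = none ∧ s' = Function.update s i (some b)

/-- Terminal states: no `⊘`-entry. -/
def IsTerminal {D : ℕ} (s : GState D) : Prop := ∀ i, s i ≠ none

/-- The embedding of `X = {0,1}^D` as the set of terminal states. -/
def ofX {D : ℕ} (x : Fin D → Bool) : GState D := fun i => some (x i)

/-- `|s|`: the number of non-`⊘` entries of `s`. -/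
def numAssigned {D : ℕ} (s : GState D) : ℕ :=
  (Finset.univ.filter fun i => s i ≠ none).card

/-- A complete trajectory `τ = (t₀ → t₁ → ⋯ → t_n)`, encoded as the list of its states:
it starts at `s₀`, each consecutive pair is an edge of `G`, and it ends at a terminal state. -/
def IsCompleteTraj {D : ℕ} (l : List (GState D)) : Prop :=
  l.head? = some (initState D) ∧ l.Chain' IsChild ∧
    ∃ s, l.getLast? = some s ∧ IsTerminal s

/-- The trajectory `l` ends at the terminal state corresponding to `x ∈ X`. -/
def EndsAt {D : ℕ} (l : List (GState D)) (x : Fin D → Bool) : Prop :=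
  l.getLast? = some (ofX x)

/-- `PF` is a forward policy: for every nonterminal `s`, `PF s ·` is a probability
distribution supported on the children of `s` (`PF s s'` is `P_F(s'|s)`). -/
def IsForwardPolicy {D : ℕ} (PF : GState D → GState D → ℝ) : Prop :=
  ∀ s : GState D, ¬ IsTerminal s →
    (∀ s', 0 ≤ PF s s') ∧ (∀ s', PF s s' ≠ 0 → IsChild s s') ∧
    (∑ s' : GState D, PF s s' = 1)

/-- `PB` is a backward policy: for every noninitial `s'`, `PB s' ·` is a probability
distribution supported on the parents of `s'` (`PB s' s` is `P_B(s|s')`). -/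
def IsBackwardPolicy {D : ℕ} (PB : GState D → GState D → ℝ) : Prop :=
  ∀ s' : GState D, s' ≠ initState D →
    (∀ s, 0 ≤ PB s' s) ∧ (∀ s, PB s' s ≠ 0 → IsChild s s') ∧
    (∑ s : GState D, PB s' s = 1)

/-- `P_F(τ) = ∏_{i<n} P_F(t_{i+1}|t_i)` along a trajectory. -/
def trajPF {D : ℕ} (PF : GState D → GState D → ℝ) (l : List (GState D)) : ℝ :=
  ((l.zip l.tail).map fun p => PF p.1 p.2).prod

/-- `P_B(τ|x) = ∏_{i<n} P_B(t_i|t_{i+1})` along a trajectory. -/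
def trajPB {D : ℕ} (PB : GState D → GState D → ℝ) (l : List (GState D)) : ℝ :=
  ((l.zip l.tail).map fun p => PB p.2 p.1).prod

/-- Trajectory balance for reward `R`: `Z·P_F(τ) = R(x)·P_B(τ|x)` for every complete
trajectory `τ` ending at `x`. -/
def TrajBalance {D : ℕ} (PF PB : GState D → GState D → ℝ) (Z : ℝ)
    (R : (Fin D → Bool) → ℝ) : Prop :=
  ∀ (l : List (GState D)) (x : Fin D → Bool),
    IsCompleteTraj l → EndsAt l x → Z * trajPF PF l = R x * trajPB PB l

/-- The terminating probability `P_T(x)`: the sum of `P_F(τ)` over all complete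
trajectories ending at `x`. -/
noncomputable def PT {D : ℕ} (PF : GState D → GState D → ℝ) (x : Fin D → Bool) : ℝ :=
  ∑ᶠ l ∈ {l : List (GState D) | IsCompleteTraj l ∧ EndsAt l x}, trajPF PF l

/-- A path in `G` from `s` to `t`, encoded as the list of its states. -/
def IsPath {D : ℕ} (l : List (GState D)) (s t : GState D) : Prop :=
  l.Chain' IsChild ∧ l.head? = some s ∧ l.getLast? = some t
/-- The state flow `F(s)`: sum of `F(τ) = Z·P_F(τ)` over complete trajectories through `s`. -/
noncomputable def stateFlow {D : ℕ} (PF : GState D → GState D → ℝ) (Z : ℝ)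
    (s : GState D) : ℝ :=
  ∑ᶠ l ∈ {l : List (GState D) | IsCompleteTraj l ∧ s ∈ l}, Z * trajPF PF l

/-- The edge flow `F(s→s')`: sum of `F(τ) = Z·P_F(τ)` over complete trajectories
containing the edge `s → s'`. -/
noncomputable def edgeFlow {D : ℕ} (PF : GState D → GState D → ℝ) (Z : ℝ)
    (s s' : GState D) : ℝ :=
  ∑ᶠ l ∈ {l : List (GState D) | IsCompleteTraj l ∧ (s, s') ∈ l.zip l.tail}, Z * trajPF PF l

/-- The Shannon entropy `H[P_F(·|s)]` of the forward policy at `s` (natural log,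
with `0·log 0 = 0`). -/
noncomputable def stepEntropyF {D : ℕ} (PF : GState D → GState D → ℝ) (s : GState D) : ℝ :=
  ∑ s' : GState D, Real.negMulLog (PF s s')

/-- The entropy of the flow determined by `P_F`:
`H[P_F] = Σ_τ P_F(τ) · Σ_{i<n} H[P_F(·|t_i)]`. -/
noncomputable def flowEntropy {D : ℕ} (PF : GState D → GState D → ℝ) : ℝ :=
  ∑ᶠ l ∈ {l : List (GState D) | IsCompleteTraj l},
    trajPF PF l * (l.dropLast.map (stepEntropyF PF)).sum

/-- The uniform backward policy `P_B°(s|s') = 1/|s'|` for each parent `s` of `s'`. -/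
noncomputable def uniformBackward (D : ℕ) : GState D → GState D → ℝ :=
  fun s' s => if IsChild s s' then 1 / (numAssigned s' : ℝ) else 0

namespace S15

variable {D : ℕ}

def extract (s : GState D) : Fin D → Bool := fun i => (s i).getD false

lemma extract_ofX (x : Fin D → Bool) : extract (ofX x) = x := rfl

lemma isTerminal_ofX (x : Fin D → Bool) : IsTerminal (ofX x) := by
  intro i h; simp [ofX] at h

lemma terminal_eq_ofX {s : GState D} (h : IsTerminal s) : s = ofX (extract s) := by
  funext i
  cases hi : s i with
  | none => exact absurd hi (h i)
  | some b => simp [ofX, extract, hi]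

lemma numAssigned_le (s : GState D) : numAssigned s ≤ D := by
  classical
  simpa [numAssigned] using Finset.card_filter_le Finset.univ (fun i => s i ≠ none)

lemma isTerminal_iff {s : GState D} : IsTerminal s ↔ numAssigned s = D := by
  classical
  constructor
  · intro h
    have : (Finset.univ.filter fun i => s i ≠ none) = Finset.univ := by
      apply Finset.filter_true_of_mem; intro i _; exact h i
    simp [numAssigned, this]
  · intro h i
    have : (Finset.univ.filter fun i => s i ≠ none) = Finset.univ := by
      apply Finset.eq_univ_of_card
      rw [Fintype.card_fin]; exact h
    have hi : i ∈ Finset.univ.filter fun i => s i ≠ none := by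
      rw [this]; exact Finset.mem_univ i
    exact (Finset.mem_filter.mp hi).2

lemma numAssigned_init : numAssigned (initState D) = 0 := by
  simp [numAssigned, initState]

lemma numAssigned_eq_zero_iff {s : GState D} : numAssigned s = 0 ↔ s = initState D := by
  classical
  constructor
  · intro h
    funext i
    have : (Finset.univ.filter fun i => s i ≠ none) = ∅ := Finset.card_eq_zero.mp h
    have hi := Finset.filter_eq_empty_iff.mp this (Finset.mem_univ i)
    simpa [initState] using hi
  · rintro rfl; exact numAssigned_init

lemma child_numAssigned {s s' : GState D} (h : IsChild s s') :
    numAssigned s' = numAssigned s + 1 := by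
  classical
  obtain ⟨i, b, hi, rfl⟩ := h
  unfold numAssigned
  have hset : (Finset.univ.filter fun j => Function.update s i (some b) j ≠ none)
      = insert i (Finset.univ.filter fun j => s j ≠ none) := by
    ext j
    by_cases hj : j = i
    · subst hj; simp [Function.update_self]
    · simp [Function.update_of_ne hj, hj]
  rw [hset, Finset.card_insert_of_notMem (by simp [hi])]

lemma IsChild.not_terminal {s s' : GState D} (h : IsChild s s') : ¬ IsTerminal s := by
  obtain ⟨i, b, hi, _⟩ := h
  exact fun ht => ht i hi

lemma IsChild.ne_init {s s' : GState D} (h : IsChild s s') : s' ≠ initState D := by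
  obtain ⟨i, b, hi, rfl⟩ := h
  intro he
  have := congrFun he i
  simp [initState, Function.update_self] at this

lemma exists_child {s : GState D} (h : ¬ IsTerminal s) : ∃ s', IsChild s s' := by
  rw [IsTerminal] at h
  push_neg at h
  obtain ⟨i, hi⟩ := h
  exact ⟨Function.update s i (some true), i, true, hi, rfl⟩

lemma exists_parent {s : GState D} (h : s ≠ initState D) : ∃ p, IsChild p s := by
  classical
  have : ∃ i b, s i = some b := by
    by_contra hc
    push_neg at hc
    apply h
    funext i
    cases hi : s i with
    | none => rfl
    | some b => exact absurd hi (hc i b)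
  obtain ⟨i, b, hib⟩ := this
  refine ⟨Function.update s i none, i, b, Function.update_self _ _ _, ?_⟩
  funext j
  by_cases hj : j = i
  · subst hj; simp [Function.update_self, hib]
  · simp [Function.update_of_ne hj]

/-! ### trajectory product lemmas -/

lemma trajPF_nil (f : GState D → GState D → ℝ) : trajPF f ([] : List (GState D)) = 1 := rfl

lemma trajPF_singleton (f : GState D → GState D → ℝ) (a : GState D) : trajPF f [a] = 1 := rfl

lemma trajPB_singleton (PB : GState D → GState D → ℝ) (a : GState D) : trajPB PB [a] = 1 := rfl

lemma trajPF_cons_cons (f : GState D → GState D → ℝ) (a b : GState D) (l : List (GState D)) :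
    trajPF f (a :: b :: l) = f a b * trajPF f (b :: l) := rfl

lemma trajPB_eq_trajPF (PB : GState D → GState D → ℝ) (l : List (GState D)) :
    trajPB PB l = trajPF (fun a b => PB b a) l := rfl

lemma trajPF_append (f : GState D → GState D → ℝ) :
    ∀ (l : List (GState D)) {p : GState D} (q : GState D) (r : List (GState D)),
    l.getLast? = some p →
    trajPF f (l ++ q :: r) = trajPF f l * f p q * trajPF f (q :: r) := by
  intro l
  induction l with
  | nil => intro p q r h; simp at h
  | cons a m ih =>
    intro p q r h
    cases m with
    | nil =>
      simp only [List.getLast?_singleton, Option.some_inj] at h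
      subst h
      simp [trajPF_singleton, trajPF_cons_cons]
    | cons b m' =>
      rw [List.getLast?_cons_cons] at h
      have h2 := ih q r h
      have e1 : trajPF f ((a :: b :: m') ++ q :: r) = f a b * trajPF f ((b :: m') ++ q :: r) := rfl
      have e2 : trajPF f (a :: b :: m') = f a b * trajPF f (b :: m') := rfl
      rw [e1, e2, h2]
      ring

lemma trajPF_pos {f : GState D → GState D → ℝ}
    (hf : ∀ a b : GState D, IsChild a b → 0 < f a b) :
    ∀ l : List (GState D), l.Chain' IsChild → 0 < trajPF f l := by
  intro l
  induction l with
  | nil => intro _; norm_num [trajPF_nil]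
  | cons a m ih =>
    intro h
    cases m with
    | nil => norm_num [trajPF_singleton]
    | cons b m' =>
      simp only [List.Chain', List.isChain_cons_cons] at h
      rw [trajPF_cons_cons]
      exact mul_pos (hf a b h.1) (ih h.2)

/-! ### the canonical flow -/

variable (PB : GState D → GState D → ℝ) (R : (Fin D → Bool) → ℝ)

noncomputable def Faux : ℕ → GState D → ℝ
  | 0, s => R (extract s)
  | n+1, s =>
      if IsTerminal s then R (extract s)
      else ∑ s' : GState D, if IsChild s s' then Faux n s' * PB s' s else 0

noncomputable def Fflow (s : GState D) : ℝ := Faux PB R (D - numAssigned s) s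

variable {PB R}

lemma Fflow_terminal {s : GState D} (h : IsTerminal s) : Fflow PB R s = R (extract s) := by
  unfold Fflow
  rw [isTerminal_iff.mp h, Nat.sub_self]
  rfl

lemma Fflow_nonterminal {s : GState D} (h : ¬ IsTerminal s) :
    Fflow PB R s = ∑ s' : GState D, if IsChild s s' then Fflow PB R s' * PB s' s else 0 := by
  have hlt : numAssigned s < D :=
    lt_of_le_of_ne (numAssigned_le s) (fun he => h (isTerminal_iff.mpr he))
  obtain ⟨n, hn⟩ : ∃ n, D - numAssigned s = n + 1 := ⟨D - numAssigned s - 1, by omega⟩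
  unfold Fflow
  rw [hn]
  show (if IsTerminal s then R (extract s)
      else ∑ s' : GState D, if IsChild s s' then Faux PB R n s' * PB s' s else 0) = _
  rw [if_neg h]
  refine Finset.sum_congr rfl fun s' _ => ?_
  by_cases hc : IsChild s s'
  · have h2 : D - numAssigned s' = n := by
      have := child_numAssigned hc
      omega
    rw [if_pos hc, if_pos hc]
    show Faux PB R n s' * PB s' s = Faux PB R (D - numAssigned s') s' * PB s' s
    rw [h2]
  · rw [if_neg hc, if_neg hc]

lemma Fflow_pos (hR : ∀ x, 0 < R x) (hB : ∀ s s' : GState D, IsChild s s' → 0 < PB s' s)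
    (s : GState D) : 0 < Fflow PB R s := by
  suffices H : ∀ n (s : GState D), D - numAssigned s = n → 0 < Fflow PB R s from H _ s rfl
  intro n
  induction n with
  | zero =>
    intro s hs
    have ht : IsTerminal s := isTerminal_iff.mpr (by have := numAssigned_le s; omega)
    rw [Fflow_terminal ht]
    exact hR _
  | succ n ih =>
    intro s hs
    have hnt : ¬ IsTerminal s := fun ht => by rw [isTerminal_iff] at ht; omega
    rw [Fflow_nonterminal hnt]
    obtain ⟨s', hc⟩ := exists_child hnt
    have key : ∀ t, IsChild s t → 0 < Fflow PB R t := fun t htc =>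
      ih t (by have := child_numAssigned htc; omega)
    apply Finset.sum_pos'
    · intro t _
      by_cases hc' : IsChild s t
      · rw [if_pos hc']
        exact le_of_lt (mul_pos (key t hc') (hB _ _ hc'))
      · rw [if_neg hc']
    · exact ⟨s', Finset.mem_univ _, by
        rw [if_pos hc]; exact mul_pos (key s' hc) (hB _ _ hc)⟩

lemma level_sum (hPB : IsBackwardPolicy PB) :
    ∀ n, n ≤ D →
      ∑ s ∈ Finset.univ.filter (fun s : GState D => numAssigned s = D - n), Fflow PB R s
        = ∑ x : Fin D → Bool, R x := by
  intro n
  induction n with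
  | zero =>
    intro _
    rw [Nat.sub_zero]
    refine Finset.sum_nbij' (fun s => extract s) (fun x => ofX x) ?_ ?_ ?_ ?_ ?_
    · intro s _; exact Finset.mem_univ _
    · intro x _
      simp only [Finset.mem_filter, Finset.mem_univ, true_and]
      exact isTerminal_iff.mp (isTerminal_ofX x)
    · intro s hs
      simp only [Finset.mem_filter, Finset.mem_univ, true_and] at hs
      exact (terminal_eq_ofX (isTerminal_iff.mpr hs)).symm
    · intro x _; rfl
    · intro s hs
      simp only [Finset.mem_filter, Finset.mem_univ, true_and] at hs
      exact Fflow_terminal (isTerminal_iff.mpr hs)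
  | succ n ih =>
    intro hn
    have hsum : ∀ s ∈ Finset.univ.filter (fun s : GState D => numAssigned s = D - (n+1)),
        Fflow PB R s = ∑ s' : GState D, if IsChild s s' then Fflow PB R s' * PB s' s else 0 := by
      intro s hs
      simp only [Finset.mem_filter, Finset.mem_univ, true_and] at hs
      exact Fflow_nonterminal (fun ht => by rw [isTerminal_iff] at ht; omega)
    rw [Finset.sum_congr rfl hsum, Finset.sum_comm]
    have inner : ∀ s' : GState D,
        (∑ s ∈ Finset.univ.filter (fun s : GState D => numAssigned s = D - (n+1)),
          if IsChild s s' then Fflow PB R s' * PB s' s else 0)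
        = if numAssigned s' = D - n then Fflow PB R s' else 0 := by
      intro s'
      by_cases h1 : numAssigned s' = D - n
      · rw [if_pos h1]
        have hne : s' ≠ initState D := by
          intro he
          rw [he, numAssigned_init] at h1
          omega
        obtain ⟨hnn, hsupp, hsum1⟩ := hPB s' hne
        have e1 : (∑ s ∈ Finset.univ.filter (fun s : GState D => numAssigned s = D - (n+1)),
            if IsChild s s' then Fflow PB R s' * PB s' s else 0)
            = Fflow PB R s' * ∑ s ∈ Finset.univ.filter
                (fun s : GState D => numAssigned s = D - (n+1)),
                if IsChild s s' then PB s' s else 0 := by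
          rw [Finset.mul_sum]
          refine Finset.sum_congr rfl fun s _ => ?_
          by_cases hc : IsChild s s' <;> simp [hc]
        rw [e1, Finset.sum_filter]
        have e2 : ∀ s : GState D,
            (if numAssigned s = D - (n+1) then if IsChild s s' then PB s' s else 0 else 0)
            = PB s' s := by
          intro s
          by_cases hz : PB s' s = 0
          · rw [hz]; split <;> simp
          · have hc := hsupp s hz
            have hk : numAssigned s = D - (n+1) := by
              have := child_numAssigned hc
              omega
            rw [if_pos hk, if_pos hc]
        rw [Finset.sum_congr rfl (fun s _ => e2 s), hsum1, mul_one]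
      · rw [if_neg h1]
        refine Finset.sum_eq_zero fun s hs => ?_
        simp only [Finset.mem_filter, Finset.mem_univ, true_and] at hs
        rw [if_neg]
        intro hc
        have := child_numAssigned hc
        omega
    rw [Finset.sum_congr rfl (fun s' _ => inner s'), ← Finset.sum_filter]
    exact ih (by omega)

lemma Fflow_init (hPB : IsBackwardPolicy PB) :
    Fflow PB R (initState D) = ∑ x : Fin D → Bool, R x := by
  have h := level_sum (R := R) hPB D le_rfl
  rw [Nat.sub_self] at h
  have hset : (Finset.univ.filter fun s : GState D => numAssigned s = 0) = {initState D} := by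
    ext s
    simp [numAssigned_eq_zero_iff]
  rw [hset, Finset.sum_singleton] at h
  exact h

/-! ### the canonical forward policy -/

noncomputable def PFc (PB : GState D → GState D → ℝ) (R : (Fin D → Bool) → ℝ) :
    GState D → GState D → ℝ :=
  fun s s' => if IsChild s s' then Fflow PB R s' * PB s' s / Fflow PB R s else 0

lemma PFc_forward (hR : ∀ x, 0 < R x) (hB : ∀ s s' : GState D, IsChild s s' → 0 < PB s' s) :
    IsForwardPolicy (PFc PB R) := by
  intro s hs
  have hF : 0 < Fflow PB R s := Fflow_pos hR hB s
  refine ⟨fun s' => ?_, fun s' h => ?_, ?_⟩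
  · unfold PFc
    by_cases hc : IsChild s s'
    · rw [if_pos hc]
      exact div_nonneg (mul_nonneg (Fflow_pos hR hB s').le (hB _ _ hc).le) hF.le
    · rw [if_neg hc]
  · by_contra hc
    exact h (by unfold PFc; rw [if_neg hc])
  · have : ∑ s' : GState D, PFc PB R s s'
        = (∑ s' : GState D, if IsChild s s' then Fflow PB R s' * PB s' s else 0) / Fflow PB R s := by
      rw [Finset.sum_div]
      refine Finset.sum_congr rfl fun s' _ => ?_
      unfold PFc
      by_cases hc : IsChild s s' <;> simp [hc]
    rw [this, ← Fflow_nonterminal hs, div_self hF.ne']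

lemma path_balance (hR : ∀ x, 0 < R x) (hB : ∀ s s' : GState D, IsChild s s' → 0 < PB s' s) :
    ∀ l : List (GState D), l.Chain' IsChild → ∀ s t : GState D,
      l.head? = some s → l.getLast? = some t →
      Fflow PB R s * trajPF (PFc PB R) l = Fflow PB R t * trajPB PB l := by
  intro l
  induction l with
  | nil => intro _ s t hs _; simp at hs
  | cons a m ih =>
    intro hch s t hs ht
    have hsa : a = s := by simpa using hs
    induction hsa
    cases m with
    | nil =>
      have hta : a = t := by simpa using ht
      induction hta
      rfl
    | cons b r =>
      simp only [List.Chain', List.isChain_cons_cons] at hch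
      obtain ⟨hab, hch'⟩ := hch
      rw [List.getLast?_cons_cons] at ht
      have key := ih hch' b t rfl ht
      have hFa : 0 < Fflow PB R a := Fflow_pos hR hB a
      have hPFab : Fflow PB R a * PFc PB R a b = Fflow PB R b * PB b a := by
        unfold PFc
        rw [if_pos hab]
        field_simp
      have e1 : trajPF (PFc PB R) (a :: b :: r) = PFc PB R a b * trajPF (PFc PB R) (b :: r) := rfl
      have e2 : trajPB PB (a :: b :: r) = PB b a * trajPB PB (b :: r) := rfl
      rw [e1, e2]
      calc Fflow PB R a * (PFc PB R a b * trajPF (PFc PB R) (b :: r))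
          = (Fflow PB R a * PFc PB R a b) * trajPF (PFc PB R) (b :: r) := by ring
        _ = (Fflow PB R b * PB b a) * trajPF (PFc PB R) (b :: r) := by rw [hPFab]
        _ = PB b a * (Fflow PB R b * trajPF (PFc PB R) (b :: r)) := by ring
        _ = PB b a * (Fflow PB R t * trajPB PB (b :: r)) := by rw [key]
        _ = Fflow PB R t * (PB b a * trajPB PB (b :: r)) := by ring

/-! ### paths -/

lemma snoc_path {l : List (GState D)} {s s' : GState D}
    (h1 : l.head? = some (initState D)) (h2 : l.Chain' IsChild) (h3 : l.getLast? = some s)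
    (hc : IsChild s s') :
    (l ++ [s']).head? = some (initState D) ∧ (l ++ [s']).Chain' IsChild ∧
      (l ++ [s']).getLast? = some s' := by
  have hln : l ≠ [] := by rintro rfl; simp at h1
  refine ⟨?_, ?_, ?_⟩
  · cases l with
    | nil => simp at h1
    | cons a m => simpa using h1
  · refine List.IsChain.append h2 (List.isChain_singleton s') ?_
    intro x hx y hy
    rw [h3] at hx
    simp at hx hy
    subst hx
    subst hy
    exact hc
  · simp

lemma exists_path_init : ∀ n (s : GState D), numAssigned s = n →
    ∃ l : List (GState D), l.head? = some (initState D) ∧ l.Chain' IsChild ∧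
      l.getLast? = some s := by
  intro n
  induction n with
  | zero =>
    intro s hs
    rw [numAssigned_eq_zero_iff] at hs
    subst hs
    exact ⟨[initState D], rfl, List.isChain_singleton _, rfl⟩
  | succ n ih =>
    intro s hs
    have hne : s ≠ initState D := by
      intro h
      rw [h, numAssigned_init] at hs
      omega
    obtain ⟨p, hp⟩ := exists_parent hne
    have hpn : numAssigned p = n := by have := child_numAssigned hp; omega
    obtain ⟨l, hl1, hl2, hl3⟩ := ih p hpn
    obtain ⟨g1, g2, g3⟩ := snoc_path hl1 hl2 hl3 hp
    exact ⟨l ++ [s], g1, g2, g3⟩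

/-! ### uniqueness lemma -/

lemma lemU (hPB : IsBackwardPolicy PB)
    (PF : GState D → GState D → ℝ) (Z : ℝ)
    (hPF : IsForwardPolicy PF) (hTB : TrajBalance PF PB Z R) :
    ∀ n (s : GState D), D - numAssigned s = n → ∀ l : List (GState D),
      l.head? = some (initState D) → l.Chain' IsChild → l.getLast? = some s →
      Z * trajPF PF l = Fflow PB R s * trajPB PB l := by
  intro n
  induction n with
  | zero =>
    intro s hs l h1 h2 h3
    have ht : IsTerminal s := isTerminal_iff.mpr (by have := numAssigned_le s; omega)
    have hx : EndsAt l (extract s) := by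
      rw [EndsAt, ← terminal_eq_ofX ht]
      exact h3
    have := hTB l (extract s) ⟨h1, h2, s, h3, ht⟩ hx
    rw [this, Fflow_terminal ht]
  | succ n ih =>
    intro s hs l h1 h2 h3
    have hnt : ¬ IsTerminal s := fun ht => by rw [isTerminal_iff] at ht; omega
    obtain ⟨hnn, hsupp, hsum⟩ := hPF s hnt
    have key : ∀ s', IsChild s s' →
        Z * trajPF PF l * PF s s' = Fflow PB R s' * PB s' s * trajPB PB l := by
      intro s' hc
      obtain ⟨g1, g2, g3⟩ := snoc_path h1 h2 h3 hc
      have hres := ih s' (by have := child_numAssigned hc; omega) (l ++ [s']) g1 g2 g3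
      rw [trajPF_append PF l s' [] h3, trajPB_eq_trajPF,
        trajPF_append (fun a b => PB b a) l s' [] h3, ← trajPB_eq_trajPF,
        trajPF_singleton] at hres
      calc Z * trajPF PF l * PF s s' = Z * (trajPF PF l * PF s s' * trajPF PF [s']) := by
            rw [trajPF_singleton]; ring
        _ = Fflow PB R s' * (trajPB PB l * PB s' s * 1) := hres
        _ = Fflow PB R s' * PB s' s * trajPB PB l := by ring
    calc Z * trajPF PF l = Z * trajPF PF l * ∑ s' : GState D, PF s s' := by rw [hsum, mul_one]
      _ = ∑ s' : GState D, Z * trajPF PF l * PF s s' := by rw [Finset.mul_sum]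
      _ = ∑ s' : GState D, (if IsChild s s' then Fflow PB R s' * PB s' s else 0) * trajPB PB l := by
          refine Finset.sum_congr rfl fun s' _ => ?_
          by_cases hc : IsChild s s'
          · rw [if_pos hc]
            exact key s' hc
          · have hz : PF s s' = 0 := by
              by_contra h
              exact hc (hsupp s' h)
            simp [hz, hc]
      _ = Fflow PB R s * trajPB PB l := by rw [← Finset.sum_mul, ← Fflow_nonterminal hnt]

lemma Z_eq (hPB : IsBackwardPolicy PB)
    (PF : GState D → GState D → ℝ) (Z : ℝ)
    (hPF : IsForwardPolicy PF) (hTB : TrajBalance PF PB Z R) :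
    Z = Fflow PB R (initState D) := by
  have := lemU hPB PF Z hPF hTB (D - numAssigned (initState D)) (initState D) rfl
    [initState D] rfl (List.isChain_singleton _) rfl
  simpa [trajPF_singleton, trajPB_singleton] using this

lemma PF_eq (hR : ∀ x, 0 < R x) (hB : ∀ s s' : GState D, IsChild s s' → 0 < PB s' s)
    (hPB : IsBackwardPolicy PB)
    (PF : GState D → GState D → ℝ) (Z : ℝ) (hZ : 0 < Z)
    (hPF : IsForwardPolicy PF) (hTB : TrajBalance PF PB Z R)
    {s s' : GState D} (hc : IsChild s s') :
    PF s s' = Fflow PB R s' * PB s' s / Fflow PB R s := by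
  obtain ⟨l, h1, h2, h3⟩ := exists_path_init (numAssigned s) s rfl
  have e1 := lemU hPB PF Z hPF hTB (D - numAssigned s) s rfl l h1 h2 h3
  obtain ⟨g1, g2, g3⟩ := snoc_path h1 h2 h3 hc
  have e2 := lemU hPB PF Z hPF hTB (D - numAssigned s') s' rfl (l ++ [s']) g1 g2 g3
  rw [trajPF_append PF l s' [] h3, trajPB_eq_trajPF,
    trajPF_append (fun a b => PB b a) l s' [] h3, ← trajPB_eq_trajPF,
    trajPF_singleton, trajPF_singleton] at e2
  have hBl : 0 < trajPB PB l := trajPF_pos (fun a b h => hB a b h) l h2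
  have hFs : 0 < Fflow PB R s := Fflow_pos hR hB s
  have hmain : PF s s' * (Fflow PB R s * trajPB PB l) = Fflow PB R s' * PB s' s * trajPB PB l := by
    rw [← e1]
    calc PF s s' * (Z * trajPF PF l) = Z * (trajPF PF l * PF s s' * 1) := by ring
      _ = Fflow PB R s' * (trajPB PB l * PB s' s * 1) := e2
      _ = Fflow PB R s' * PB s' s * trajPB PB l := by ring
  have hcancel : PF s s' * Fflow PB R s = Fflow PB R s' * PB s' s := by
    have := mul_right_cancel₀ hBl.ne' (by linarith [hmain] :
      (PF s s' * Fflow PB R s) * trajPB PB l = (Fflow PB R s' * PB s' s) * trajPB PB l)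
    exact this
  field_simp
  linarith [hcancel]

end S15

/-- For a backward policy `P_B` positive on every edge of `G` and a
positive reward `R`, there exists exactly one pair `(P_F, Z)` with `Z > 0` and `P_F` a
forward policy such that `(P_F, P_B, Z)` satisfies trajectory balance for `R` (uniqueness
of `P_F` as a policy, i.e. on the edges of `G`); moreover this `Z` equals `Σ_{x∈X} R(x)`. -/
theorem statement15 {D : ℕ} (hD : 1 ≤ D)
    (PB : GState D → GState D → ℝ) (hPB : IsBackwardPolicy PB)
    (hBpos : ∀ s s' : GState D, IsChild s s' → 0 < PB s' s)
    (R : (Fin D → Bool) → ℝ) (hR : ∀ x, 0 < R x) :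
    (∃ (PF : GState D → GState D → ℝ) (Z : ℝ), 0 < Z ∧ IsForwardPolicy PF ∧
        TrajBalance PF PB Z R ∧ Z = ∑ x : Fin D → Bool, R x) ∧
    (∀ (PF PF' : GState D → GState D → ℝ) (Z Z' : ℝ),
        0 < Z → IsForwardPolicy PF → TrajBalance PF PB Z R →
        0 < Z' → IsForwardPolicy PF' → TrajBalance PF' PB Z' R →
        Z = Z' ∧ ∀ s s' : GState D, IsChild s s' → PF s s' = PF' s s') := by
  classical
  constructor
  · refine ⟨S15.PFc PB R, S15.Fflow PB R (initState D), S15.Fflow_pos hR hBpos _,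
      S15.PFc_forward hR hBpos, ?_, S15.Fflow_init hPB⟩
    intro l x hcomp hend
    obtain ⟨h1, h2, t, h3, ht⟩ := hcomp
    have hpb := S15.path_balance hR hBpos l h2 (initState D) (ofX x) h1 hend
    rw [hpb, S15.Fflow_terminal (S15.isTerminal_ofX x), S15.extract_ofX]
  · intro PF PF' Z Z' hZ hPF hTB hZ' hPF' hTB'
    refine ⟨?_, ?_⟩
    · rw [S15.Z_eq hPB PF Z hPF hTB, S15.Z_eq hPB PF' Z' hPF' hTB']
    · intro s s' hc
      rw [S15.PF_eq hR hBpos hPB PF Z hZ hPF hTB hc,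
        S15.PF_eq hR hBpos hPB PF' Z' hZ' hPF' hTB' hc]
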